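/- Let K be a valued field with valuation ring O_K and maximal ideal M_K, and let P ∈ O_K[X]. Suppose x ∈ M_K satisfies |P'(x)| = 1 and 0 < |P(x)| < 1. Set ε := −P(x)/P'(x). Then |ε| = |P(x)| and |P(x + ε)| ≤ |P(x)|². -/
import Mathlib


variable {K : Type*} [Field K] {Γ₀ : Type*} [LinearOrderedCommGroupWithZero Γ₀]

/-- Newton step: for `P ∈ O_K[X]`, `x ∈ M_K` with `|P'(x)| = 1` and `0 < |P(x)| < 1`,
setting `ε := −P(x)/P'(x)` one has `|ε| = |P(x)|` and `|P(x + ε)| ≤ |P(x)|²`. -/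
theorem newton_step (v : Valuation K Γ₀) (P : Polynomial K)
    (hP : ∀ i, v (P.coeff i) ≤ 1) (x : K) (hx : v x < 1)
    (hP' : v ((Polynomial.derivative P).eval x) = 1)
    (h0 : 0 < v (P.eval x)) (h1 : v (P.eval x) < 1) :
    v (-(P.eval x) / (Polynomial.derivative P).eval x) = v (P.eval x) ∧
    v (P.eval (x + -(P.eval x) / (Polynomial.derivative P).eval x)) ≤
      v (P.eval x) * v (P.eval x) := by
  set a := P.eval x with ha
  set b := (Polynomial.derivative P).eval x with hb
  have hb0 : b ≠ 0 := by
    intro h; rw [h, map_zero] at hP'; exact zero_ne_one hP'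
  have hε : v (-a / b) = v a := by
    rw [map_div₀, Valuation.map_neg, hP', div_one]
  refine ⟨hε, ?_⟩
  set ε := -a / b with hedef
  -- work in the valuation subring
  set T : Subring K := v.integer with hT
  have hcoeffs : (↑P.coeffs : Set K) ⊆ T := by
    intro c hc
    simp only [Polynomial.coeffs, Finset.coe_image, Set.mem_image] at hc
    obtain ⟨n, -, rfl⟩ := hc
    exact hP n
  set Q : Polynomial T := P.toSubring T hcoeffs with hQ
  have hmap : Q.map T.subtype = P := Polynomial.map_toSubring P T hcoeffs
  have hxT : x ∈ T := le_of_lt hx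
  have hεT : ε ∈ T := by
    show v ε ≤ 1
    rw [hε]; exact le_of_lt h1
  obtain ⟨k, hk⟩ := Q.binomExpansion ⟨x, hxT⟩ ⟨ε, hεT⟩
  have h2 : ∀ t : T, Polynomial.eval (t : K) P = ((Polynomial.eval t Q : T) : K) :=
    fun t => by rw [← hmap, Polynomial.eval_map]; exact Polynomial.eval₂_at_apply T.subtype t
  have h3 : ∀ t : T, Polynomial.eval (t : K) (Polynomial.derivative P)
      = ((Polynomial.eval t (Polynomial.derivative Q) : T) : K) :=
    fun t => by
      rw [← hmap, Polynomial.derivative_map, Polynomial.eval_map]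
      exact Polynomial.eval₂_at_apply T.subtype t
  have hk' : P.eval (x + ε) = P.eval x + (Polynomial.derivative P).eval x * ε
      + (k : K) * ε ^ 2 := by
    have e1 : x + ε = ((⟨x, hxT⟩ + ⟨ε, hεT⟩ : T) : K) := rfl
    rw [e1, h2, hk]
    push_cast
    rw [← h2 ⟨x, hxT⟩, ← h3 ⟨x, hxT⟩]
  have hcancel : a + b * ε = 0 := by
    rw [hedef]; field_simp; ring
  rw [hk', ← ha, ← hb, hcancel, zero_add]
  have hvk : v (k : K) ≤ 1 := k.2
  calc v ((k : K) * ε ^ 2) = v (k : K) * (v ε * v ε) := by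
        rw [Valuation.map_mul, pow_two, Valuation.map_mul]
      _ ≤ 1 * (v a * v a) := by rw [hε]; exact mul_le_mul' hvk le_rfl
      _ = v a * v a := one_mul _
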